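/- For any grid graph G = P_s □ P_t (s, t ≥ 2) and every integer k with 1 ≤ k ≤ s + t − 2, the k-metric dimension of G equals 2k. -/

import Mathlib

/-- A finset `S` of vertices is a `k`-resolving set for `G`: any two distinct vertices `u, w`
have different distances to at least `k` vertices of `S`. -/
def IsKResolvingSet {V : Type*} [DecidableEq V] (G : SimpleGraph V) (k : ℕ) (S : Finset V) : Prop :=
  ∀ u w : V, u ≠ w → k ≤ (S.filter (fun v => G.dist u v ≠ G.dist w v)).card

section Auxiliary

open SimpleGraph Finset

/-- Any walk in the grid graph is at least as long as the ℓ¹-distance of its endpoints. -/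
lemma gridWalk_ge {s t : ℕ} {x y : Fin s × Fin t}
    (w : ((SimpleGraph.pathGraph s).boxProd (SimpleGraph.pathGraph t)).Walk x y) :
    Nat.dist x.1.val y.1.val + Nat.dist x.2.val y.2.val ≤ w.length := by
  induction w with
  | nil => simp [Nat.dist]
  | @cons a b c h p ih =>
    rw [SimpleGraph.Walk.length_cons]
    rcases h with ⟨h1, h2⟩ | ⟨h1, h2⟩ <;>
      rw [SimpleGraph.pathGraph_adj] at h1 <;>
      [skip; skip] <;>
      · have h2' : _ = _ := congrArg Fin.val h2
        simp only [Nat.dist] at ih ⊢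
        omega

/-- In a path graph there is a walk between any two vertices whose length is the
distance of the endpoint values. -/
lemma pathGraph_walk {n : ℕ} (d : ℕ) : ∀ u v : Fin n, Nat.dist u.val v.val = d →
    ∃ w : (SimpleGraph.pathGraph n).Walk u v, w.length = d := by
  induction d with
  | zero =>
    intro u v h
    obtain rfl : u = v := Fin.ext (Nat.eq_of_dist_eq_zero h)
    exact ⟨SimpleGraph.Walk.nil, rfl⟩
  | succ d ih =>
    intro u v h
    rcases lt_trichotomy u.val v.val with hlt | heq | hgt
    · have hu' : u.val + 1 < n := lt_of_le_of_lt hlt v.isLt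
      set u' : Fin n := ⟨u.val + 1, hu'⟩ with hu'def
      have hadj : (SimpleGraph.pathGraph n).Adj u u' :=
        SimpleGraph.pathGraph_adj.mpr (Or.inl rfl)
      obtain ⟨w, hw⟩ := ih u' v (by simp only [Nat.dist, hu'def, Fin.val_mk] at h ⊢; omega)
      exact ⟨SimpleGraph.Walk.cons hadj w, by simp [hw]⟩
    · exact absurd h (by simp [Nat.dist, heq])
    · have h1 : 1 ≤ u.val := by omega
      set u' : Fin n := ⟨u.val - 1, by omega⟩ with hu'def
      have hadj : (SimpleGraph.pathGraph n).Adj u u' :=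
        SimpleGraph.pathGraph_adj.mpr (Or.inr (by simp [hu'def]; omega))
      obtain ⟨w, hw⟩ := ih u' v (by simp only [Nat.dist, hu'def, Fin.val_mk] at h ⊢; omega)
      exact ⟨SimpleGraph.Walk.cons hadj w, by simp [hw]⟩

/-- The graph distance on the grid `P_s □ P_t` is the ℓ¹ (taxicab) distance. -/
lemma grid_dist {s t : ℕ} (x y : Fin s × Fin t) :
    ((SimpleGraph.pathGraph s).boxProd (SimpleGraph.pathGraph t)).dist x y =
      Nat.dist x.1.val y.1.val + Nat.dist x.2.val y.2.val := by
  obtain ⟨p, hp⟩ := pathGraph_walk _ x.1 y.1 rfl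
  obtain ⟨q, hq⟩ := pathGraph_walk _ x.2 y.2 rfl
  refine le_antisymm ?_ ?_
  · have hd := SimpleGraph.dist_le
      ((SimpleGraph.Walk.boxProdLeft (SimpleGraph.pathGraph t) x.2 p).append
        (SimpleGraph.Walk.boxProdRight (SimpleGraph.pathGraph s) y.1 q))
    have hl1 : (SimpleGraph.Walk.boxProdLeft (SimpleGraph.pathGraph t) x.2 p).length =
        p.length := SimpleGraph.Walk.length_map _ _
    have hl2 : (SimpleGraph.Walk.boxProdRight (SimpleGraph.pathGraph s) y.1 q).length =
        q.length := SimpleGraph.Walk.length_map _ _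
    rw [SimpleGraph.Walk.length_append, hl1, hl2, hp, hq] at hd
    simpa using hd
  · obtain ⟨w', hw'⟩ := SimpleGraph.Reachable.exists_walk_length_eq_dist
      ⟨(SimpleGraph.Walk.boxProdLeft (SimpleGraph.pathGraph t) x.2 p).append
        (SimpleGraph.Walk.boxProdRight (SimpleGraph.pathGraph s) y.1 q)⟩
    exact hw' ▸ gridWalk_ge w'

/-- First coordinate of the `(i,j)`-th vertex of our `k`-resolving set. -/
def gA (s t k i j : ℕ) : ℕ :=
  if i < t then (if j = 0 then 0 else s - 1) else i - t + 1

/-- Second coordinate of the `(i,j)`-th vertex of our `k`-resolving set. -/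
def gB (t k i j : ℕ) : ℕ :=
  if i < t then (if i + 2 ≤ k then i else t - 1) else (if j = 0 then 0 else t - 1)

/-- Enumeration of the `2k` vertices of our `k`-resolving set. -/
def gf (s t k : ℕ) (hs : 0 < s) (ht : 0 < t) (p : ℕ × ℕ) : Fin s × Fin t :=
  (⟨gA s t k p.1 p.2 % s, Nat.mod_lt _ hs⟩, ⟨gB t k p.1 p.2 % t, Nat.mod_lt _ ht⟩)

lemma gA_lt {s t k : ℕ} (hs : 2 ≤ s) (hk2 : k ≤ s + t - 2) {i j : ℕ} (hi : i < k) :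
    gA s t k i j < s := by
  unfold gA; split_ifs <;> omega

lemma gB_lt {t k : ℕ} (ht : 2 ≤ t) {i j : ℕ} : gB t k i j < t := by
  unfold gB; split_ifs <;> omega

lemma gf_val {s t k : ℕ} (hs : 2 ≤ s) (ht : 2 ≤ t) (hk2 : k ≤ s + t - 2)
    {i j : ℕ} (hi : i < k) :
    ((gf s t k (by omega) (by omega) (i, j)).1.val = gA s t k i j) ∧
    ((gf s t k (by omega) (by omega) (i, j)).2.val = gB t k i j) :=
  ⟨Nat.mod_eq_of_lt (gA_lt hs hk2 hi), Nat.mod_eq_of_lt (gB_lt ht)⟩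

lemma gf_injOn {s t k : ℕ} (hs : 2 ≤ s) (ht : 2 ≤ t) (hk2 : k ≤ s + t - 2) :
    Set.InjOn (gf s t k (by omega) (by omega))
      ((Finset.range k ×ˢ Finset.range 2) : Finset (ℕ × ℕ)) := by
  rintro ⟨i, j⟩ hij ⟨i', j'⟩ hij' heq
  simp only [Finset.coe_product, Finset.mem_coe, Set.mem_prod, Finset.mem_range,
    Finset.coe_range, Set.mem_Iio] at hij hij'
  have hA : gA s t k i j = gA s t k i' j' := by
    have h1 := (gf_val hs ht hk2 (j := j) hij.1).1
    have h2 := (gf_val hs ht hk2 (j := j') hij'.1).1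
    rw [← h1, ← h2, heq]
  have hB : gB t k i j = gB t k i' j' := by
    have h1 := (gf_val hs ht hk2 (j := j) hij.1).2
    have h2 := (gf_val hs ht hk2 (j := j') hij'.1).2
    rw [← h1, ← h2, heq]
  unfold gA at hA
  unfold gB at hB
  have : i = i' ∧ j = j' := by
    split_ifs at hA hB <;> omega
  simp [this.1, this.2]

lemma gf_card {s t k : ℕ} (hs : 2 ≤ s) (ht : 2 ≤ t) (hk2 : k ≤ s + t - 2) :
    (((Finset.range k ×ˢ Finset.range 2) : Finset (ℕ × ℕ)).image
      (gf s t k (by omega) (by omega))).card = 2 * k := by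
  rw [Finset.card_image_of_injOn (gf_injOn hs ht hk2), Finset.card_product,
    Finset.card_range, Finset.card_range]
  ring

set_option maxHeartbeats 2000000 in
lemma gf_resolves {s t k : ℕ} (hs : 2 ≤ s) (ht : 2 ≤ t) (hk1 : 1 ≤ k) (hk2 : k ≤ s + t - 2) :
    IsKResolvingSet ((SimpleGraph.pathGraph s).boxProd (SimpleGraph.pathGraph t)) k
      (((Finset.range k ×ˢ Finset.range 2) : Finset (ℕ × ℕ)).image
        (gf s t k (by omega) (by omega))) := by
  intro u w huw
  set G := ((SimpleGraph.pathGraph s).boxProd (SimpleGraph.pathGraph t)) with hG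
  set S := (((Finset.range k ×ˢ Finset.range 2) : Finset (ℕ × ℕ)).image
      (gf s t k (by omega) (by omega))) with hS
  have hsplit := Finset.card_filter_add_card_filter_not (s := S)
    (fun v => G.dist u v ≠ G.dist w v)
  have hcard : S.card = 2 * k := gf_card hs ht hk2
  -- it suffices to bound the number of non-resolving vertices of `S` by `k`
  suffices hle : (S.filter (fun v => ¬(G.dist u v ≠ G.dist w v))).card ≤ k by omega
  rw [hS, Finset.filter_image]
  refine le_trans Finset.card_image_le ?_
  set D := ((Finset.range k ×ˢ Finset.range 2) : Finset (ℕ × ℕ)).filter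
      (fun a => ¬(G.dist u (gf s t k (by omega) (by omega) a) ≠
        G.dist w (gf s t k (by omega) (by omega) a))) with hD
  have hmemD : ∀ i j : ℕ, (i, j) ∈ D → i < k ∧ j < 2 ∧
      Nat.dist u.1.val (gA s t k i j) + Nat.dist u.2.val (gB t k i j) =
      Nat.dist w.1.val (gA s t k i j) + Nat.dist w.2.val (gB t k i j) := by
    intro i j hp
    have hF := Finset.mem_of_mem_filter _ hp
    simp only [Finset.mem_product, Finset.mem_range] at hF
    have heq := (Finset.mem_filter.mp hp).2
    rw [not_not, hG, grid_dist, grid_dist,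
      (gf_val hs ht hk2 hF.1).1, (gf_val hs ht hk2 hF.1).2] at heq
    exact ⟨hF.1, hF.2, heq⟩
  have hu1 : u.1.val < s := u.1.isLt
  have hu2 : u.2.val < t := u.2.isLt
  have hw1 : w.1.val < s := w.1.isLt
  have hw2 : w.2.val < t := w.2.isLt
  by_cases hx : u.1.val = w.1.val
  · -- the `x`-coordinates agree, hence the `y`-coordinates differ
    have hy : u.2.val ≠ w.2.val := by
      intro hyy
      exact huw (Prod.ext (Fin.ext hx) (Fin.ext hyy))
    have hDchar : ∀ p ∈ D, p.1 < t ∧ p.1 + 2 ≤ k ∧ 2 * p.1 = u.2.val + w.2.val := by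
      rintro ⟨i, j⟩ hp
      obtain ⟨hik, hj2, heq⟩ := hmemD i j hp
      have hmid : 2 * gB t k i j = u.2.val + w.2.val := by
        simp only [Nat.dist] at heq
        omega
      unfold gB at hmid
      split_ifs at hmid <;> omega
    rcases D.eq_empty_or_nonempty with hDe | ⟨p0, hp0⟩
    · simp [hDe]
    · have h2k : 2 ≤ k := by have := (hDchar p0 hp0).2.1; omega
      have hcardD : D.card ≤ (Finset.range 2).card := by
        refine Finset.card_le_card_of_injOn Prod.snd ?_ ?_
        · rintro ⟨i, j⟩ hp
          exact Finset.mem_range.mpr (hmemD i j hp).2.1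
        · rintro ⟨i, j⟩ hp ⟨i', j'⟩ hp' (hj : j = j')
          have h1 := (hDchar _ hp).2.2
          have h2 := (hDchar _ hp').2.2
          simp only at h1 h2
          have : i = i' := by omega
          simp [this, hj]
      simpa using le_trans hcardD (by simpa using h2k)
  · by_cases hy : u.2.val = w.2.val
    · -- the `y`-coordinates agree, hence the `x`-coordinates differ
      have hDchar : ∀ p ∈ D, t ≤ p.1 ∧ 2 * (p.1 - t + 1) = u.1.val + w.1.val := by
        rintro ⟨i, j⟩ hp
        obtain ⟨hik, hj2, heq⟩ := hmemD i j hp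
        have hmid : 2 * gA s t k i j = u.1.val + w.1.val := by
          simp only [Nat.dist] at heq
          omega
        unfold gA at hmid
        split_ifs at hmid <;> omega
      rcases D.eq_empty_or_nonempty with hDe | ⟨p0, hp0⟩
      · simp [hDe]
      · have h2k : 2 ≤ k := by
          have h1 := (hDchar p0 hp0).1
          have h2 := (hmemD p0.1 p0.2 hp0).1
          omega
        have hcardD : D.card ≤ (Finset.range 2).card := by
          refine Finset.card_le_card_of_injOn Prod.snd ?_ ?_
          · rintro ⟨i, j⟩ hp
            exact Finset.mem_range.mpr (hmemD i j hp).2.1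
          · rintro ⟨i, j⟩ hp ⟨i', j'⟩ hp' (hj : j = j')
            have h1 := (hDchar _ hp)
            have h2 := (hDchar _ hp')
            simp only at h1 h2
            have : i = i' := by omega
            simp [this, hj]
        simpa using le_trans hcardD (by simpa using h2k)
    · -- both coordinates differ: for each `i` at most one of `(i,0)`, `(i,1)` fails to resolve
      have hD2 : ∀ i : ℕ, ¬((i, 0) ∈ D ∧ (i, 1) ∈ D) := by
        rintro i ⟨h0, h1⟩
        obtain ⟨hik, -, heq0⟩ := hmemD i 0 h0
        obtain ⟨-, -, heq1⟩ := hmemD i 1 h1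
        by_cases hit : i < t
        · have e1 : gA s t k i 0 = 0 := by simp [gA, hit]
          have e2 : gA s t k i 1 = s - 1 := by simp [gA, hit]
          have e3 : gB t k i 0 = gB t k i 1 := by simp [gB, hit]
          rw [e1] at heq0
          rw [e2, ← e3] at heq1
          simp only [Nat.dist] at heq0 heq1
          omega
        · have e1 : gB t k i 0 = 0 := by simp [gB, hit]
          have e2 : gB t k i 1 = t - 1 := by simp [gB, hit]
          have e3 : gA s t k i 0 = gA s t k i 1 := by simp [gA, hit]
          rw [e1] at heq0
          rw [e2, ← e3] at heq1
          simp only [Nat.dist] at heq0 heq1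
          omega
      have hcardD : D.card ≤ (Finset.range k).card := by
        refine Finset.card_le_card_of_injOn Prod.fst ?_ ?_
        · rintro ⟨i, j⟩ hp
          exact Finset.mem_range.mpr (hmemD i j hp).1
        · rintro ⟨i, j⟩ hp ⟨i', j'⟩ hp' (hi : i = i')
          subst hi
          have hj2 := (hmemD i j hp).2.1
          have hj2' := (hmemD i j' hp').2.1
          have e1 : j = 0 ∨ j = 1 := by omega
          have e2 : j' = 0 ∨ j' = 1 := by omega
          rcases e1 with rfl | rfl <;> rcases e2 with rfl | rfl
          · rfl
          · exact absurd ⟨hp, hp'⟩ (hD2 i)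
          · exact absurd ⟨hp', hp⟩ (hD2 i)
          · rfl
      simpa using hcardD

/-- Lower bound: every `k`-resolving set of the grid has at least `2k` vertices. -/
lemma grid_lower {s t k : ℕ} (hs : 2 ≤ s) (ht : 2 ≤ t) (S : Finset (Fin s × Fin t))
    (h : IsKResolvingSet ((SimpleGraph.pathGraph s).boxProd (SimpleGraph.pathGraph t)) k S) :
    2 * k ≤ S.card := by
  set G := ((SimpleGraph.pathGraph s).boxProd (SimpleGraph.pathGraph t)) with hG
  set u1 : Fin s × Fin t := (⟨1, by omega⟩, ⟨0, by omega⟩) with hu1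
  set w1 : Fin s × Fin t := (⟨0, by omega⟩, ⟨1, by omega⟩) with hw1
  set u2 : Fin s × Fin t := (⟨0, by omega⟩, ⟨0, by omega⟩) with hu2
  set w2 : Fin s × Fin t := (⟨1, by omega⟩, ⟨1, by omega⟩) with hw2
  have h1 := h u1 w1 (by simp [hu1, hw1, Prod.ext_iff, Fin.ext_iff])
  have h2 := h u2 w2 (by simp [hu2, hw2, Prod.ext_iff, Fin.ext_iff])
  have hdisj : Disjoint (S.filter (fun v => G.dist u1 v ≠ G.dist w1 v))
      (S.filter (fun v => G.dist u2 v ≠ G.dist w2 v)) := by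
    rw [Finset.disjoint_left]
    intro v hv1 hv2
    have e1 := (Finset.mem_filter.mp hv1).2
    have e2 := (Finset.mem_filter.mp hv2).2
    rw [hG, grid_dist, grid_dist] at e1 e2
    simp only [hu1, hw1, hu2, hw2, Nat.dist] at e1 e2
    omega
  calc 2 * k = k + k := by ring
    _ ≤ (S.filter (fun v => G.dist u1 v ≠ G.dist w1 v)).card
        + (S.filter (fun v => G.dist u2 v ≠ G.dist w2 v)).card := Nat.add_le_add h1 h2
    _ = ((S.filter (fun v => G.dist u1 v ≠ G.dist w1 v))
        ∪ (S.filter (fun v => G.dist u2 v ≠ G.dist w2 v))).card :=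
      (Finset.card_union_of_disjoint hdisj).symm
    _ ≤ S.card := Finset.card_le_card (Finset.union_subset
        (Finset.filter_subset _ _) (Finset.filter_subset _ _))

end Auxiliary

/-- For the grid graph `G = P_s □ P_t` (`s, t ≥ 2`) and any `k` with `1 ≤ k ≤ s + t - 2`,
the `k`-metric dimension of `G` (the least size of a `k`-resolving set) equals `2k`. -/
theorem grid_kMetricDimension (s t : ℕ) (hs : 2 ≤ s) (ht : 2 ≤ t)
    (k : ℕ) (hk1 : 1 ≤ k) (hk2 : k ≤ s + t - 2) :
    sInf {n : ℕ | ∃ S : Finset (Fin s × Fin t),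
        IsKResolvingSet ((SimpleGraph.pathGraph s).boxProd (SimpleGraph.pathGraph t)) k S ∧
          S.card = n} = 2 * k := by
  have hmem : (2 * k) ∈ {n : ℕ | ∃ S : Finset (Fin s × Fin t),
      IsKResolvingSet ((SimpleGraph.pathGraph s).boxProd (SimpleGraph.pathGraph t)) k S ∧
        S.card = n} :=
    ⟨_, gf_resolves hs ht hk1 hk2, gf_card hs ht hk2⟩
  refine le_antisymm (Nat.sInf_le hmem) (le_csInf ⟨_, hmem⟩ ?_)
  rintro n ⟨S, hres, rfl⟩
  exact grid_lower hs ht S hres
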